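/- For every n ≥ 2, the sum over all link patterns π of n−1 strands of (exposure number of π) + 1 equals the Catalan number C_n; equivalently, the set of link patterns of n strands is the disjoint union, over link patterns π of n−1 strands, of the fibers e⁻¹(π′) where π′ is the insertion of a strand at the end of π. -/

import Mathlib

/-- A link pattern of `n` strands: a fixed-point-free involution of `{0, …, 2n-1}`
that is noncrossing. -/
def IsLinkPattern (n : ℕ) (μ : Fin (2*n) → Fin (2*n)) : Prop :=
  (∀ i, μ (μ i) = i) ∧ (∀ i, μ i ≠ i) ∧
  (∀ a b c d : Fin (2*n), a < b → b < c → c < d → μ a = c → μ b = d → False)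

noncomputable instance (n : ℕ) :
    Fintype {μ : Fin (2*n) → Fin (2*n) // IsLinkPattern n μ} :=
  Fintype.ofFinite _

/-- The exposure number of `μ`: the number of outermost links `(a, b)` (pairs with
`a < b`, `μ a = b`, such that there is no link `(c, d)` with `c < a` and `b < d`). -/
noncomputable def exposure (n : ℕ) (μ : Fin (2*n) → Fin (2*n)) : ℕ :=
  Nat.card {p : Fin (2*n) × Fin (2*n) //
    p.1 < p.2 ∧ μ p.1 = p.2 ∧ ∀ c d : Fin (2*n), c < p.1 → p.2 < d → μ c ≠ d}

/-- The Temperley–Lieb generator `e` (acting at the sites `2n-2`, `2n-1`). -/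
def eFun (n : ℕ) (μ : Fin (2*n) → Fin (2*n)) : Fin (2*n) → Fin (2*n) := fun i =>
  if h : 1 ≤ n then
    let a : Fin (2*n) := ⟨2*n - 2, by omega⟩
    let b : Fin (2*n) := ⟨2*n - 1, by omega⟩
    if μ a = b then μ i
    else if i = a then b
    else if i = b then a
    else if i = μ a then μ b
    else if i = μ b then μ a
    else μ i
  else μ i

/-- Insertion of a strand at the end. -/
def insertEnd (m : ℕ) (π : Fin (2*m) → Fin (2*m)) : Fin (2*(m+1)) → Fin (2*(m+1)) :=
  fun i =>
    if h : (i : ℕ) < 2*m then Fin.castLE (by omega) (π ⟨(i : ℕ), h⟩)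
    else if (i : ℕ) = 2*m then ⟨2*m + 1, by omega⟩
    else ⟨2*m, by omega⟩

/-- ℕ-level version of a link pattern: an involution of ℕ that is the identity
outside `[0, 2n)`, fixed-point free and noncrossing inside. -/
def NatLP (n : ℕ) (f : ℕ → ℕ) : Prop :=
  (∀ i, f (f i) = i) ∧ (∀ i, i < 2*n → f i ≠ i ∧ f i < 2*n) ∧ (∀ i, 2*n ≤ i → f i = i) ∧
  (∀ a b c d : ℕ, a < b → b < c → c < d → d < 2*n → f a = c → f b = d → False)

lemma natLP_toNatFun {n : ℕ} {μ : Fin (2*n) → Fin (2*n)} (h : IsLinkPattern n μ) :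
    NatLP n (fun i => if h' : i < 2*n then (μ ⟨i, h'⟩ : ℕ) else i) := by
  obtain ⟨h1, h2, h3⟩ := h
  refine ⟨?_, ?_, ?_, ?_⟩
  · intro i
    by_cases hi : i < 2*n
    · simp [hi, Fin.eta, h1]
    · simp [hi]
  · intro i hi
    simp only [dif_pos hi]
    refine ⟨fun e => h2 ⟨i, hi⟩ (Fin.ext e), (μ ⟨i, hi⟩).isLt⟩
  · intro i hi; simp [Nat.not_lt.2 hi]
  · intro a b c d hab hbc hcd hd hac hbd
    have ha : a < 2*n := by omega
    have hb : b < 2*n := by omega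
    have hc : c < 2*n := by omega
    have hac' : (μ ⟨a, ha⟩ : ℕ) = c := by simpa [ha] using hac
    have hbd' : (μ ⟨b, hb⟩ : ℕ) = d := by simpa [hb] using hbd
    exact h3 ⟨a, ha⟩ ⟨b, hb⟩ ⟨c, hc⟩ ⟨d, hd⟩ hab hbc hcd (Fin.ext (by rw [hac'])) (Fin.ext (by rw [hbd']))

lemma isLP_ofNatLP {n : ℕ} {f : ℕ → ℕ} (h : NatLP n f) :
    IsLinkPattern n (fun i => (⟨f i, (h.2.1 i i.isLt).2⟩ : Fin (2*n))) := by
  obtain ⟨h1, h2, h3, h4⟩ := h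
  refine ⟨?_, ?_, ?_⟩
  · intro i; exact Fin.ext (by simpa using h1 i)
  · intro i e
    exact (h2 i i.isLt).1 (congrArg Fin.val e)
  · intro a b c d hab hbc hcd hac hbd
    exact h4 a b c d hab hbc hcd d.isLt (congrArg Fin.val hac) (congrArg Fin.val hbd)

def lpEquiv (n : ℕ) : {μ : Fin (2*n) → Fin (2*n) // IsLinkPattern n μ} ≃ {f : ℕ → ℕ // NatLP n f} where
  toFun μ := ⟨_, natLP_toNatFun μ.2⟩
  invFun f := ⟨_, isLP_ofNatLP f.2⟩
  left_inv μ := by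
    apply Subtype.ext; funext i; apply Fin.ext
    simp
  right_inv f := by
    apply Subtype.ext; funext i
    by_cases hi : i < 2*n
    · simp [hi]
    · simp [hi, f.2.2.2.1 i (by omega)]

instance natLP_finite (n : ℕ) : Finite {f : ℕ → ℕ // NatLP n f} :=
  Finite.of_equiv _ (lpEquiv n)

lemma even_card_of_invol (g : ℕ → ℕ) (s : Finset ℕ) :
    (∀ x ∈ s, g x ∈ s) → (∀ x ∈ s, g (g x) = x) → (∀ x ∈ s, g x ≠ x) →
      Even s.card := by
  induction s using Finset.strongInduction with
  | _ s ih =>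
    intro h1 h2 h3
    rcases s.eq_empty_or_nonempty with rfl | ⟨x, hx⟩
    · simp
    · have hgx : g x ∈ s := h1 x hx
      have hne : g x ≠ x := h3 x hx
      set t := (s.erase x).erase (g x) with ht
      have hts : t ⊆ s := fun y hy =>
        Finset.mem_of_mem_erase (Finset.mem_of_mem_erase hy)
      have hsub : t ⊂ s := by
        refine Finset.ssubset_iff_of_subset hts |>.2 ⟨x, hx, ?_⟩
        simp [ht, hne.symm]
      have hmem : ∀ y ∈ t, y ≠ x ∧ y ≠ g x ∧ y ∈ s := by
        intro y hy
        have h' := Finset.mem_erase.1 hy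
        have h'' := Finset.mem_erase.1 h'.2
        exact ⟨h''.1, h'.1, h''.2⟩
      have h1' : ∀ y ∈ t, g y ∈ t := by
        intro y hy
        obtain ⟨hyx, hygx, hys⟩ := hmem y hy
        refine Finset.mem_erase.2 ⟨?_, Finset.mem_erase.2 ⟨?_, h1 y hys⟩⟩
        · intro e
          exact hyx (by rw [← h2 y hys, e, h2 x hx])
        · intro e
          exact hygx (by rw [← h2 y hys, e])
      have hcard : s.card = t.card + 2 := by
        rw [ht, Finset.card_erase_of_mem (Finset.mem_erase.2 ⟨hne, hgx⟩),
          Finset.card_erase_of_mem hx]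
        have h2le : 2 ≤ s.card := Finset.one_lt_card.2 ⟨g x, hgx, x, hx, hne⟩
        omega
      rw [hcard]
      exact (ih t hsub (fun y hy => h1' y hy) (fun y hy => h2 y (hmem y hy).2.2)
        (fun y hy => h3 y (hmem y hy).2.2)).add even_two

lemma natLP_zero_odd {n : ℕ} {f : ℕ → ℕ} (h : NatLP n f) (hn : 0 < n) :
    ∃ k, k < n ∧ f 0 = 2*k+1 := by
  obtain ⟨h1, h2, h3, h4⟩ := h
  have h0 := h2 0 (by omega)
  have hEven : Even (Finset.Ioo 0 (f 0)).card := by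
    apply even_card_of_invol f
    · intro x hx
      simp only [Finset.mem_Ioo] at hx ⊢
      have hx2 : x < 2*n := by omega
      have hfx := h2 x hx2
      constructor
      · rcases Nat.eq_zero_or_pos (f x) with he | he
        · exfalso; have : f (f x) = f 0 := by rw [he]
          rw [h1 x] at this; omega
        · exact he
      · by_contra hgt
        push_neg at hgt
        rcases Nat.lt_or_ge (f 0) (f x) with hlt | hge
        · exact h4 0 x (f 0) (f x) hx.1 hx.2 hlt hfx.2 rfl rfl
        · have : f x = f 0 := by omega
          have : f (f x) = f (f 0) := by rw [this]
          rw [h1, h1] at this; omega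
    · intro x _; exact h1 x
    · intro x hx
      simp only [Finset.mem_Ioo] at hx
      exact (h2 x (by omega)).1
  rw [Nat.card_Ioo] at hEven
  obtain ⟨k, hk⟩ := hEven
  exact ⟨k, by omega, by omega⟩

/-- restriction of `f` to the window `[s, s+2m)`, shifted down by `s`. -/
def shiftRestrict (s m : ℕ) (f : ℕ → ℕ) : ℕ → ℕ := fun i => if i < 2*m then f (i+s) - s else i

lemma natLP_shiftRestrict {N : ℕ} {f : ℕ → ℕ} (h : NatLP N f) (s m : ℕ)
    (hNm : s + 2*m ≤ 2*N)
    (hcl : ∀ i, s ≤ i → i < s + 2*m → s ≤ f i ∧ f i < s + 2*m) :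
    NatLP m (shiftRestrict s m f) := by
  obtain ⟨h1, h2, h3, h4⟩ := h
  have key : ∀ i, i < 2*m → shiftRestrict s m f i = f (i+s) - s ∧ s ≤ f (i+s) ∧
      f (i+s) < s + 2*m ∧ f (i+s) ≠ i + s := by
    intro i hi
    have hcl' := hcl (i+s) (by omega) (by omega)
    have h2' := h2 (i+s) (by omega)
    exact ⟨if_pos hi, hcl'.1, hcl'.2, h2'.1⟩
  refine ⟨?_, ?_, ?_, ?_⟩
  · intro i
    by_cases hi : i < 2*m
    · obtain ⟨he, hl, hu, hne⟩ := key i hi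
      rw [he]
      obtain ⟨he2, hl2, hu2, hne2⟩ := key (f (i+s) - s) (by omega)
      rw [he2]
      have : f (i+s) - s + s = f (i+s) := by omega
      rw [this, h1]
      omega
    · simp [shiftRestrict, hi]
  · intro i hi
    obtain ⟨he, hl, hu, hne⟩ := key i hi
    rw [he]; omega
  · intro i hi
    simp only [shiftRestrict]
    rw [if_neg (by omega)]
  · intro a b c d hab hbc hcd hd hac hbd
    obtain ⟨hea, hla, hua, _⟩ := key a (by omega)
    obtain ⟨heb, hlb, hub, _⟩ := key b (by omega)
    rw [hea] at hac
    rw [heb] at hbd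
    exact h4 (a+s) (b+s) (c+s) (d+s) (by omega) (by omega) (by omega) (by omega)
      (by omega) (by omega)

/-- glue a pattern of `k` strands inside a big arc `(0, 2k+1)`, followed by a
pattern of `m'` strands. -/
def glueLP (k m' : ℕ) (f₁ f₂ : ℕ → ℕ) : ℕ → ℕ := fun i =>
  if i = 0 then 2*k+1
  else if i = 2*k+1 then 0
  else if i < 2*k+1 then f₁ (i-1) + 1
  else if i < 2*k+2*m'+2 then f₂ (i-(2*k+2)) + (2*k+2)
  else i

lemma natLP_glue {k m' : ℕ} {f₁ f₂ : ℕ → ℕ} (h₁ : NatLP k f₁) (h₂ : NatLP m' f₂)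
    (n : ℕ) (hn : n = k + m' + 1) : NatLP n (glueLP k m' f₁ f₂) := by
  obtain ⟨h11, h12, h13, h14⟩ := h₁
  obtain ⟨h21, h22, h23, h24⟩ := h₂
  set g := glueLP k m' f₁ f₂ with hg
  have g0 : g 0 = 2*k+1 := by simp [hg, glueLP]
  have gk : g (2*k+1) = 0 := by simp [hg, glueLP]
  have gin : ∀ i, 1 ≤ i → i ≤ 2*k → g i = f₁ (i-1) + 1 ∧ 1 ≤ g i ∧ g i ≤ 2*k ∧ g i ≠ i := by
    intro i hi1 hi2
    have he : g i = f₁ (i-1) + 1 := by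
      simp only [hg, glueLP]
      rw [if_neg (by omega), if_neg (by omega), if_pos (by omega)]
    have hb := h12 (i-1) (by omega)
    refine ⟨he, by omega, by rw [he]; omega, by rw [he]; omega⟩
  have gout : ∀ i, 2*k+2 ≤ i → i < 2*n → g i = f₂ (i-(2*k+2)) + (2*k+2) ∧ 2*k+2 ≤ g i ∧
      g i < 2*n ∧ g i ≠ i := by
    intro i hi1 hi2
    have he : g i = f₂ (i-(2*k+2)) + (2*k+2) := by
      simp only [hg, glueLP]
      rw [if_neg (by omega), if_neg (by omega), if_neg (by omega), if_pos (by omega)]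
    have hb := h22 (i-(2*k+2)) (by omega)
    refine ⟨he, by omega, by rw [he]; omega, by rw [he]; omega⟩
  have gid : ∀ i, 2*n ≤ i → g i = i := by
    intro i hi
    simp only [hg, glueLP]
    rw [if_neg (by omega), if_neg (by omega), if_neg (by omega), if_neg (by omega)]
  refine ⟨?_, ?_, ?_, ?_⟩
  · intro i
    rcases Nat.lt_or_ge i (2*n) with hi | hi
    · by_cases hi0 : i = 0
      · rw [hi0, g0, gk]
      by_cases hik : i = 2*k+1
      · rw [hik, gk, g0]
      rcases Nat.lt_or_ge i (2*k+1) with hlt | hge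
      · obtain ⟨he, hb1, hb2, _⟩ := gin i (by omega) (by omega)
        rw [he]
        obtain ⟨he2, _, _, _⟩ := gin (f₁ (i-1) + 1) (by omega) (by
          have := h12 (i-1) (by omega); omega)
        rw [he2]
        simp only [Nat.add_sub_cancel]
        rw [h11]
        omega
      · obtain ⟨he, hb1, hb2, _⟩ := gout i (by omega) hi
        rw [he]
        obtain ⟨he2, _, _, _⟩ := gout (f₂ (i-(2*k+2)) + (2*k+2)) (by omega) (by
          have := h22 (i-(2*k+2)) (by omega); omega)
        rw [he2]
        simp only [Nat.add_sub_cancel]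
        rw [h21]
        omega
    · rw [gid i hi, gid i hi]
  · intro i hi
    by_cases hi0 : i = 0
    · subst hi0; rw [g0]; constructor <;> omega
    by_cases hik : i = 2*k+1
    · subst hik; rw [gk]; constructor <;> omega
    rcases Nat.lt_or_ge i (2*k+1) with hlt | hge
    · obtain ⟨_, hb1, hb2, hne⟩ := gin i (by omega) (by omega)
      exact ⟨hne, by omega⟩
    · obtain ⟨_, hb1, hb2, hne⟩ := gout i (by omega) hi
      exact ⟨hne, by omega⟩
  · exact gid
  · intro a b c d hab hbc hcd hd ha hb
    by_cases ha0 : a = 0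
    · subst ha0
      rw [g0] at ha
      have hb' : 1 ≤ b ∧ b ≤ 2*k := by omega
      obtain ⟨_, _, hb2, _⟩ := gin b hb'.1 hb'.2
      omega
    by_cases hak : a = 2*k+1
    · subst hak; rw [gk] at ha; omega
    rcases Nat.lt_or_ge a (2*k+1) with hlt | hge
    · -- a inner
      obtain ⟨hea, _, hca, _⟩ := gin a (by omega) (by omega)
      rw [hea] at ha
      -- c ≤ 2k, so b inner
      have hbin : 1 ≤ b ∧ b ≤ 2*k := by omega
      obtain ⟨heb, _, hdb, _⟩ := gin b hbin.1 hbin.2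
      rw [heb] at hb
      exact h14 (a-1) (b-1) (c-1) (d-1) (by omega) (by omega) (by omega) (by omega)
        (by omega) (by omega)
    · -- a outer
      have han : a < 2*n := by omega
      obtain ⟨hea, hca1, hca2, _⟩ := gout a (by omega) han
      rw [hea] at ha
      obtain ⟨heb, hdb1, hdb2, _⟩ := gout b (by omega) (by omega)
      rw [heb] at hb
      exact h24 (a-(2*k+2)) (b-(2*k+2)) (c-(2*k+2)) (d-(2*k+2)) (by omega) (by omega)
        (by omega) (by omega) (by omega) (by omega)

lemma closure_in {n k : ℕ} {f : ℕ → ℕ} (h : NatLP (n+1) f) (hk : k ≤ n) (h0 : f 0 = 2*k+1) :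
    ∀ i, 1 ≤ i → i ≤ 2*k → 1 ≤ f i ∧ f i ≤ 2*k := by
  obtain ⟨h1, h2, h3, h4⟩ := h
  intro i hi1 hi2
  have hiN : i < 2*(n+1) := by omega
  have hfi := h2 i hiN
  have hne0 : f i ≠ 0 := by
    intro e
    have : f (f i) = f 0 := by rw [e]
    rw [h1, h0] at this; omega
  have hnek : f i ≠ 2*k+1 := by
    intro e
    have : f (f i) = f (f 0) := by rw [e, h0]
    rw [h1, h1] at this; omega
  have : ¬ (2*k+2 ≤ f i) := by
    intro hge
    exact h4 0 i (2*k+1) (f i) (by omega) (by omega) (by omega) hfi.2 h0 rfl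
  omega

lemma closure_out {n k : ℕ} {f : ℕ → ℕ} (h : NatLP (n+1) f) (hk : k ≤ n) (h0 : f 0 = 2*k+1) :
    ∀ i, 2*k+2 ≤ i → i < 2*(n+1) → 2*k+2 ≤ f i ∧ f i < 2*(n+1) := by
  obtain ⟨h1, h2, h3, h4⟩ := h
  intro i hi1 hi2
  have hfi := h2 i hi2
  have hne0 : f i ≠ 0 := by
    intro e
    have : f (f i) = f 0 := by rw [e]
    rw [h1, h0] at this; omega
  have hnek : f i ≠ 2*k+1 := by
    intro e
    have : f (f i) = f (f 0) := by rw [e, h0]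
    rw [h1, h1] at this; omega
  have : ¬ (f i ≤ 2*k) := by
    intro hle
    have h1le : 1 ≤ f i := by omega
    exact h4 0 (f i) (2*k+1) i (by omega) (by omega) (by omega) hi2 h0 (h1 i)
  omega

lemma glue_split {n k : ℕ} {f : ℕ → ℕ} (h : NatLP (n+1) f) (hk : k ≤ n) (h0 : f 0 = 2*k+1) :
    glueLP k (n-k) (shiftRestrict 1 k f) (shiftRestrict (2*k+2) (n-k) f) = f := by
  have hin := closure_in h hk h0
  have hout := closure_out h hk h0
  obtain ⟨h1, h2, h3, h4⟩ := h
  funext i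
  simp only [glueLP]
  by_cases hi0 : i = 0
  · rw [if_pos hi0, hi0, h0]
  rw [if_neg hi0]
  by_cases hik : i = 2*k+1
  · rw [if_pos hik, hik, ← h0, h1]
  rw [if_neg hik]
  by_cases hlt : i < 2*k+1
  · rw [if_pos hlt]
    have harg : i - 1 < 2*k := by omega
    simp only [shiftRestrict]
    rw [if_pos harg]
    have : i - 1 + 1 = i := by omega
    rw [this]
    have := hin i (by omega) (by omega)
    omega
  rw [if_neg hlt]
  by_cases hup : i < 2*k+2*(n-k)+2
  · rw [if_pos hup]
    have harg : i - (2*k+2) < 2*(n-k) := by omega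
    simp only [shiftRestrict]
    rw [if_pos harg]
    have : i - (2*k+2) + (2*k+2) = i := by omega
    rw [this]
    have := hout i (by omega) (by omega)
    omega
  · rw [if_neg hup]
    exact (h3 i (by omega)).symm

lemma split_glue₁ {k m' : ℕ} {f₁ f₂ : ℕ → ℕ} (h₁ : NatLP k f₁) :
    shiftRestrict 1 k (glueLP k m' f₁ f₂) = f₁ := by
  funext i
  simp only [shiftRestrict]
  by_cases hi : i < 2*k
  · rw [if_pos hi]
    simp only [glueLP]
    rw [if_neg (by omega), if_neg (by omega), if_pos (by omega)]
    simp
  · rw [if_neg hi, (h₁.2.2.1 i (by omega))]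

lemma split_glue₂ {k m' : ℕ} {f₁ f₂ : ℕ → ℕ} (h₂ : NatLP m' f₂) :
    shiftRestrict (2*k+2) m' (glueLP k m' f₁ f₂) = f₂ := by
  funext i
  simp only [shiftRestrict]
  by_cases hi : i < 2*m'
  · rw [if_pos hi]
    simp only [glueLP]
    rw [if_neg (by omega), if_neg (by omega), if_neg (by omega), if_pos (by omega)]
    simp
  · rw [if_neg hi, (h₂.2.2.1 i (by omega))]

def decompEquiv (n k : ℕ) (hk : k ≤ n) :
    {f : ℕ → ℕ // NatLP (n+1) f ∧ f 0 = 2*k+1} ≃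
      ({f : ℕ → ℕ // NatLP k f} × {f : ℕ → ℕ // NatLP (n-k) f}) where
  toFun f := (⟨shiftRestrict 1 k f.1, natLP_shiftRestrict f.2.1 1 k (by omega) (by
                 intro i hi1 hi2
                 have := closure_in f.2.1 hk f.2.2 i hi1 (by omega); omega)⟩,
              ⟨shiftRestrict (2*k+2) (n-k) f.1, natLP_shiftRestrict f.2.1 (2*k+2) (n-k)
                 (by omega) (by
                 intro i hi1 hi2
                 have := closure_out f.2.1 hk f.2.2 i hi1 (by omega); omega)⟩)
  invFun p := ⟨glueLP k (n-k) p.1.1 p.2.1, natLP_glue p.1.2 p.2.2 (n+1) (by omega),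
    by simp [glueLP]⟩
  left_inv f := Subtype.ext (glue_split f.2.1 hk f.2.2)
  right_inv p := by
    obtain ⟨⟨f₁, h₁⟩, ⟨f₂, h₂⟩⟩ := p
    exact Prod.ext (Subtype.ext (split_glue₁ h₁)) (Subtype.ext (split_glue₂ h₂))

lemma natLP_card : ∀ n : ℕ, Nat.card {f : ℕ → ℕ // NatLP n f} = catalan n := by
  intro n
  induction n using Nat.strong_induction_on with
  | _ n ih =>
    match n with
    | 0 =>
      have h0 : NatLP 0 id := ⟨fun i => rfl, fun i hi => absurd hi (by omega),
        fun i _ => rfl, fun a b c d _ _ _ hd _ _ => absurd hd (by omega)⟩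
      haveI : Unique {f : ℕ → ℕ // NatLP 0 f} :=
        ⟨⟨⟨id, h0⟩⟩, fun f => Subtype.ext (funext fun i => f.2.2.2.1 i (by omega))⟩
      simp [Nat.card_unique, catalan_zero]
    | (n+1) =>
      classical
      letI : Fintype {f : ℕ → ℕ // NatLP (n+1) f} := @Fintype.ofFinite _ (natLP_finite (n+1))
      rw [Nat.card_eq_fintype_card]
      have hmap : ∀ x : {f : ℕ → ℕ // NatLP (n+1) f}, x ∈ (Finset.univ) →
          (x.1 0 - 1)/2 ∈ Finset.range (n+1) := by
        intro x _
        obtain ⟨k, hk, he⟩ := natLP_zero_odd x.2 (by omega)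
        rw [he, Finset.mem_range]
        omega
      rw [← Finset.card_univ, Finset.card_eq_sum_card_fiberwise hmap]
      have hsum : ∀ k ∈ Finset.range (n+1),
          (Finset.univ.filter fun x : {f : ℕ → ℕ // NatLP (n+1) f} => (x.1 0 - 1)/2 = k).card
          = catalan k * catalan (n-k) := by
        intro k hk
        have hk' : k ≤ n := by
          have := Finset.mem_range.1 hk; omega
        have hfe : (Finset.univ.filter fun x : {f : ℕ → ℕ // NatLP (n+1) f} =>
            (x.1 0 - 1)/2 = k) = (Finset.univ.filter fun x => x.1 0 = 2*k+1) := by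
          apply Finset.filter_congr
          intro x _
          obtain ⟨j, hj, he⟩ := natLP_zero_odd x.2 (by omega)
          rw [he]
          constructor <;> intro h' <;> omega
        rw [hfe, ← Fintype.card_subtype, ← Nat.card_eq_fintype_card,
          Nat.card_congr ((Equiv.subtypeSubtypeEquivSubtypeInter _ _).trans
            (decompEquiv n k hk')), Nat.card_prod, ih k (by omega), ih (n-k) (by omega)]
      rw [Finset.sum_congr rfl hsum, catalan_succ n]
      exact (Fin.sum_univ_eq_sum_range (fun j => catalan j * catalan (n - j)) (n+1)).symm

/-! Part B: the Temperley–Lieb fiber structure. -/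

def AA (m : ℕ) : Fin (2*(m+1)) := ⟨2*(m+1)-2, by omega⟩
def BB (m : ℕ) : Fin (2*(m+1)) := ⟨2*(m+1)-1, by omega⟩

@[simp] lemma AA_val (m : ℕ) : (AA m : ℕ) = 2*m := by simp [AA]; omega
@[simp] lemma BB_val (m : ℕ) : (BB m : ℕ) = 2*m+1 := by simp [BB]; omega

lemma eFun_eq (m : ℕ) (μ : Fin (2*(m+1)) → Fin (2*(m+1))) : eFun (m+1) μ = fun i =>
    if μ (AA m) = BB m then μ i
    else if i = AA m then BB m
    else if i = BB m then AA m
    else if i = μ (AA m) then μ (BB m)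
    else if i = μ (BB m) then μ (AA m)
    else μ i := by
  funext i
  simp only [eFun, AA, BB]
  rw [dif_pos (by omega : 1 ≤ m+1)]
  rfl

lemma lp_nc' {n : ℕ} {μ : Fin (2*n) → Fin (2*n)} (h : IsLinkPattern n μ) :
    ∀ a b c d : Fin (2*n),
      (a:ℕ) < (b:ℕ) → (b:ℕ) < (c:ℕ) → (c:ℕ) < (d:ℕ) → μ a = c → μ b = d → False :=
  fun a b c d h1 h2 h3 => h.2.2 a b c d h1 h2 h3

lemma lp_inj {n : ℕ} {μ : Fin (2*n) → Fin (2*n)} (h : IsLinkPattern n μ)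
    {i j : Fin (2*n)} (e : μ i = μ j) : i = j := by
  rw [← h.1 i, e, h.1]

lemma lp_swap {n : ℕ} {μ : Fin (2*n) → Fin (2*n)} (h : IsLinkPattern n μ)
    {i j : Fin (2*n)} : μ i = j ↔ μ j = i := by
  constructor <;> intro e <;> rw [← e, h.1]

/-- values of the two partners, in the generic case. -/
lemma lp_xy {m : ℕ} {μ : Fin (2*(m+1)) → Fin (2*(m+1))} (h : IsLinkPattern (m+1) μ)
    (hne : μ (AA m) ≠ BB m) :
    (μ (AA m) : ℕ) < 2*m ∧ (μ (BB m) : ℕ) < 2*m ∧ (μ (BB m) : ℕ) < (μ (AA m) : ℕ) := by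
  have hAne : (μ (AA m) : ℕ) ≠ 2*m := by
    intro e
    exact h.2.1 (AA m) (Fin.ext (by rw [e, AA_val]))
  have hAne' : (μ (AA m) : ℕ) ≠ 2*m+1 := by
    intro e
    exact hne (Fin.ext (by rw [e, BB_val]))
  have hBne : (μ (BB m) : ℕ) ≠ 2*m+1 := by
    intro e
    exact h.2.1 (BB m) (Fin.ext (by rw [e, BB_val]))
  have hBne' : (μ (BB m) : ℕ) ≠ 2*m := by
    intro e
    apply hne
    have : μ (BB m) = AA m := Fin.ext (by rw [e, AA_val])
    rw [lp_swap h] at this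
    rw [this]
  have hA : (μ (AA m) : ℕ) < 2*m := by
    have := (μ (AA m)).isLt; omega
  have hB : (μ (BB m) : ℕ) < 2*m := by
    have := (μ (BB m)).isLt; omega
  refine ⟨hA, hB, ?_⟩
  have hxy : (μ (AA m) : ℕ) ≠ (μ (BB m) : ℕ) := by
    intro e
    have : μ (AA m) = μ (BB m) := Fin.ext e
    have := lp_inj h this
    have : (AA m : ℕ) = (BB m : ℕ) := congrArg Fin.val this
    simp at this
  by_contra hcon
  push_neg at hcon
  exact lp_nc' h (μ (AA m)) (μ (BB m)) (AA m) (BB m)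
    (by omega) (by rw [AA_val]; omega) (by simp)
    ((lp_swap h).2 rfl) ((lp_swap h).2 rfl)

def up (m : ℕ) : Fin (2*m) → Fin (2*(m+1)) := Fin.castLE (by omega)

@[simp] lemma up_val (m : ℕ) (i : Fin (2*m)) : (up m i : ℕ) = (i : ℕ) := rfl

def collapseF (m : ℕ) (μ : Fin (2*(m+1)) → Fin (2*(m+1))) : Fin (2*m) → Fin (2*m) := fun i =>
  if h : (μ (up m i) : ℕ) < 2*m then ⟨_, h⟩
  else if (μ (up m i) : ℕ) = 2*m then
    (if h' : (μ (BB m) : ℕ) < 2*m then ⟨_, h'⟩ else i)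
  else (if h' : (μ (AA m) : ℕ) < 2*m then ⟨_, h'⟩ else i)

lemma collapseF_of_lt {m : ℕ} {μ : Fin (2*(m+1)) → Fin (2*(m+1))} {i : Fin (2*m)}
    (hlt : (μ (up m i) : ℕ) < 2*m) : collapseF m μ i = ⟨_, hlt⟩ := by
  simp [collapseF, hlt]

lemma collapseF_of_eqA {m : ℕ} {μ : Fin (2*(m+1)) → Fin (2*(m+1))} {i : Fin (2*m)}
    (he : (μ (up m i) : ℕ) = 2*m) (hy : (μ (BB m) : ℕ) < 2*m) :
    collapseF m μ i = ⟨_, hy⟩ := by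
  simp [collapseF, he, hy]

lemma collapseF_of_eqB {m : ℕ} {μ : Fin (2*(m+1)) → Fin (2*(m+1))} {i : Fin (2*m)}
    (he : (μ (up m i) : ℕ) = 2*m+1) (hx : (μ (AA m) : ℕ) < 2*m) :
    collapseF m μ i = ⟨_, hx⟩ := by
  simp only [collapseF]
  rw [dif_neg (by omega), if_neg (by omega), dif_pos hx]

lemma partner_lt {m : ℕ} {μ : Fin (2*(m+1)) → Fin (2*(m+1))} (h : IsLinkPattern (m+1) μ)
    (i : Fin (2*m)) (hA : up m i ≠ μ (AA m)) (hB : up m i ≠ μ (BB m)) :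
    (μ (up m i) : ℕ) < 2*m := by
  have h1 : (μ (up m i) : ℕ) ≠ 2*m := by
    intro e
    have e1 : μ (up m i) = AA m := Fin.ext (by simp [e])
    exact hA ((lp_swap h).1 e1).symm
  have h2 : (μ (up m i) : ℕ) ≠ 2*m+1 := by
    intro e
    have e1 : μ (up m i) = BB m := Fin.ext (by simp [e])
    exact hB ((lp_swap h).1 e1).symm
  have := (μ (up m i)).isLt
  omega

lemma collapse_isLP {m : ℕ} {μ : Fin (2*(m+1)) → Fin (2*(m+1))}
    (h : IsLinkPattern (m+1) μ) : IsLinkPattern m (collapseF m μ) := by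
  by_cases hAB : μ (AA m) = BB m
  · -- the last two points are linked; collapse is just restriction
    have hgen : ∀ i : Fin (2*m), (μ (up m i) : ℕ) < 2*m := by
      intro i
      refine partner_lt h i ?_ ?_
      · intro e
        have : (up m i : ℕ) = (μ (AA m) : ℕ) := congrArg Fin.val e
        rw [hAB, BB_val, up_val] at this
        omega
      · intro e
        have hBA : μ (BB m) = AA m := (lp_swap h).1 hAB
        have : (up m i : ℕ) = (μ (BB m) : ℕ) := congrArg Fin.val e
        rw [hBA, AA_val, up_val] at this
        omega
    refine ⟨?_, ?_, ?_⟩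
    · intro i
      rw [collapseF_of_lt (hgen i)]
      have hup : up m (⟨_, hgen i⟩ : Fin (2*m)) = μ (up m i) := Fin.ext rfl
      rw [collapseF_of_lt (by rw [hup, h.1]; exact i.isLt : (μ (up m ⟨_, hgen i⟩) : ℕ) < 2*m)]
      apply Fin.ext
      simp only [hup, h.1]
      rfl
    · intro i e
      have : (μ (up m i) : ℕ) = (i : ℕ) := by
        rw [collapseF_of_lt (hgen i)] at e
        exact congrArg Fin.val e
      exact h.2.1 (up m i) (Fin.ext (by rw [this]; rfl))
    · intro a b c d hab hbc hcd hac hbd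
      rw [collapseF_of_lt (hgen a)] at hac
      rw [collapseF_of_lt (hgen b)] at hbd
      have hac' : μ (up m a) = up m c := by
        apply Fin.ext
        simpa using congrArg Fin.val hac
      have hbd' : μ (up m b) = up m d := by
        apply Fin.ext
        simpa using congrArg Fin.val hbd
      exact lp_nc' h (up m a) (up m b) (up m c) (up m d) hab hbc hcd hac' hbd'
  · -- generic case
    obtain ⟨hx, hy, hyx⟩ := lp_xy h hAB
    -- case analysis helper
    have trich : ∀ i : Fin (2*m), (up m i = μ (AA m) ∧ collapseF m μ i = ⟨_, hy⟩) ∨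
        (up m i = μ (BB m) ∧ collapseF m μ i = ⟨_, hx⟩) ∨
        ((μ (up m i) : ℕ) < 2*m ∧ up m i ≠ μ (AA m) ∧ up m i ≠ μ (BB m) ∧
          (collapseF m μ i : ℕ) = (μ (up m i) : ℕ)) := by
      intro i
      by_cases hA : up m i = μ (AA m)
      · left
        refine ⟨hA, ?_⟩
        apply collapseF_of_eqA _ hy
        rw [hA, h.1, AA_val]
      by_cases hB : up m i = μ (BB m)
      · right; left
        refine ⟨hB, ?_⟩
        apply collapseF_of_eqB _ hx
        rw [hB, h.1, BB_val]
      · right; right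
        have hlt := partner_lt h i hA hB
        exact ⟨hlt, hA, hB, by rw [collapseF_of_lt hlt]⟩
    have hne2 : ∀ {i j : Fin (2*(m+1))}, μ i = μ j → i = j := fun e => lp_inj h e
    refine ⟨?_, ?_, ?_⟩
    · intro i
      rcases trich i with ⟨hA, hc⟩ | ⟨hB, hc⟩ | ⟨hlt, hA, hB, hc⟩
      · rw [hc]
        rcases trich ⟨_, hy⟩ with ⟨h', _⟩ | ⟨_, hc2⟩ | ⟨_, _, h', _⟩
        · exfalso
          have hupy : up m (⟨_, hy⟩ : Fin (2*m)) = μ (BB m) := Fin.ext rfl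
          rw [hupy] at h'
          have := congrArg Fin.val (hne2 h'.symm)
          simp at this
        · rw [hc2]
          apply Fin.ext
          simpa using (congrArg Fin.val hA).symm
        · exact absurd (Fin.ext rfl) h'
      · rw [hc]
        rcases trich ⟨_, hx⟩ with ⟨_, hc2⟩ | ⟨h', _⟩ | ⟨_, h', _, _⟩
        · rw [hc2]
          apply Fin.ext
          simpa using (congrArg Fin.val hB).symm
        · exfalso
          have hupx : up m (⟨_, hx⟩ : Fin (2*m)) = μ (AA m) := Fin.ext rfl
          rw [hupx] at h'
          have := congrArg Fin.val (hne2 h')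
          simp at this
        · exact absurd (Fin.ext rfl) h'
      · have hupj : up m (collapseF m μ i) = μ (up m i) := Fin.ext (by rw [up_val, hc])
        rcases trich (collapseF m μ i) with ⟨h', _⟩ | ⟨h', _⟩ | ⟨_, _, _, hc2⟩
        · exfalso
          rw [hupj] at h'
          have : μ (μ (up m i)) = μ (μ (AA m)) := congrArg μ h'
          rw [h.1, h.1] at this
          have := congrArg Fin.val this
          simp at this
          omega
        · exfalso
          rw [hupj] at h'
          have : μ (μ (up m i)) = μ (μ (BB m)) := congrArg μ h'
          rw [h.1, h.1] at this
          have := congrArg Fin.val this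
          simp at this
          omega
        · apply Fin.ext
          rw [hc2, hupj, h.1, up_val]
    · intro i e
      rcases trich i with ⟨hA, hc⟩ | ⟨hB, hc⟩ | ⟨hlt, hA, hB, hc⟩
      · rw [hc] at e
        have e1 := congrArg Fin.val e
        have e2 := congrArg Fin.val hA
        simp at e1 e2
        omega
      · rw [hc] at e
        have e1 := congrArg Fin.val e
        have e2 := congrArg Fin.val hB
        simp at e1 e2
        omega
      · have e1 := congrArg Fin.val e
        rw [hc] at e1
        exact h.2.1 (up m i) (Fin.ext (by rw [e1, up_val]))
    · intro p q r s hpq hqr hrs hpr hqs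
      have hvx : (μ (AA m) : ℕ) = (μ (AA m) : ℕ) := rfl
      rcases trich p with ⟨hA, hc⟩ | ⟨hB, hc⟩ | ⟨hlt, hA, hB, hc⟩
      · -- p corresponds to x : impossible since r = y < x
        rw [hpr] at hc
        have e1 := congrArg Fin.val hA
        have e2 := congrArg Fin.val hc
        simp at e1 e2
        have h1 : (p:ℕ) < (q:ℕ) := hpq
        have h2 : (q:ℕ) < (r:ℕ) := hqr
        omega
      · -- new link (p, r) = (y, x)
        rw [hpr] at hc
        have e1 := congrArg Fin.val hB
        have e2 := congrArg Fin.val hc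
        simp at e1 e2
        rcases trich q with ⟨hA', hc'⟩ | ⟨hB', hc'⟩ | ⟨hlt', hA', hB', hc'⟩
        · have e3 := congrArg Fin.val hA'
          simp at e3
          have hqr' : (q:ℕ) < (r:ℕ) := hqr
          omega
        · have e3 := congrArg Fin.val hB'
          simp at e3
          have hpq' : (p:ℕ) < (q:ℕ) := hpq
          omega
        · have hqs' : μ (up m q) = up m s := Fin.ext (by rw [← hc']; exact congrArg Fin.val hqs)
          refine lp_nc' h (up m q) (μ (AA m)) (up m s) (AA m) ?_ ?_ ?_ hqs' (h.1 _)
          · rw [up_val]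
            have : (q:ℕ) < (r:ℕ) := hqr
            omega
          · rw [up_val]
            have : (r:ℕ) < (s:ℕ) := hrs
            omega
          · rw [up_val, AA_val]
            exact s.isLt
      · have hpr' : μ (up m p) = up m r := Fin.ext (by rw [← hc]; exact congrArg Fin.val hpr)
        rcases trich q with ⟨hA', hc'⟩ | ⟨hB', hc'⟩ | ⟨hlt', hA', hB', hc'⟩
        · rw [hqs] at hc'
          have e3 := congrArg Fin.val hA'
          have e4 := congrArg Fin.val hc'
          simp at e3 e4
          have : (q:ℕ) < (s:ℕ) := hqr.trans hrs
          omega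
        · rw [hqs] at hc'
          have e3 := congrArg Fin.val hB'
          have e4 := congrArg Fin.val hc'
          simp at e3 e4
          refine lp_nc' h (up m p) (μ (BB m)) (up m r) (BB m) ?_ ?_ ?_ hpr' (h.1 _)
          · rw [up_val]
            have : (p:ℕ) < (q:ℕ) := hpq
            omega
          · rw [up_val]
            have : (q:ℕ) < (r:ℕ) := hqr
            omega
          · rw [up_val, BB_val]
            have := r.isLt
            omega
        · have hqs' : μ (up m q) = up m s := Fin.ext (by rw [← hc']; exact congrArg Fin.val hqs)
          exact lp_nc' h (up m p) (up m q) (up m r) (up m s) hpq hqr hrs hpr' hqs'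


lemma insertEnd_of_lt {m : ℕ} {π : Fin (2*m) → Fin (2*m)} {i : Fin (2*(m+1))}
    (hi : (i:ℕ) < 2*m) : insertEnd m π i = Fin.castLE (by omega) (π ⟨(i:ℕ), hi⟩) :=
  dif_pos hi

lemma insertEnd_eq_mid {m : ℕ} {π : Fin (2*m) → Fin (2*m)} {i : Fin (2*(m+1))}
    (hi : (i:ℕ) = 2*m) : insertEnd m π i = BB m := by
  simp only [insertEnd]
  rw [dif_neg (by omega), if_pos hi]
  exact Fin.ext (by simp)

lemma insertEnd_eq_top {m : ℕ} {π : Fin (2*m) → Fin (2*m)} {i : Fin (2*(m+1))}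
    (hi : (i:ℕ) = 2*m+1) : insertEnd m π i = AA m := by
  simp only [insertEnd]
  rw [dif_neg (by omega), if_neg (by omega)]
  exact Fin.ext (by simp)

lemma insertEnd_inj {m : ℕ} {π₁ π₂ : Fin (2*m) → Fin (2*m)}
    (e : insertEnd m π₁ = insertEnd m π₂) : π₁ = π₂ := by
  funext i
  have hcf := congrFun e (up m i)
  have h1 : ((up m i : Fin (2*(m+1))) : ℕ) < 2*m := by simpa using i.isLt
  rw [insertEnd_of_lt h1, insertEnd_of_lt h1] at hcf
  apply Fin.ext
  have := congrArg Fin.val hcf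
  simpa [Fin.eta] using this

lemma eFun_collapse {m : ℕ} {μ : Fin (2*(m+1)) → Fin (2*(m+1))}
    (h : IsLinkPattern (m+1) μ) :
    eFun (m+1) μ = insertEnd m (collapseF m μ) := by
  rw [eFun_eq]
  funext i
  by_cases hAB : μ (AA m) = BB m
  · rw [if_pos hAB]
    by_cases hi : (i:ℕ) < 2*m
    · rw [insertEnd_of_lt hi]
      have hup : up m ⟨(i:ℕ), hi⟩ = i := Fin.ext rfl
      have hgen : (μ (up m ⟨(i:ℕ), hi⟩) : ℕ) < 2*m := by
        refine partner_lt h _ ?_ ?_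
        · intro e
          have := congrArg Fin.val e
          rw [hAB] at this
          simp at this
          omega
        · intro e
          have hBA : μ (BB m) = AA m := (lp_swap h).1 hAB
          have := congrArg Fin.val e
          rw [hBA] at this
          simp at this
          omega
      rw [collapseF_of_lt hgen]
      apply Fin.ext
      simp [hup]
    · by_cases hi2 : (i:ℕ) = 2*m
      · rw [insertEnd_eq_mid hi2]
        have hiA : i = AA m := Fin.ext (by simp [hi2])
        rw [hiA, hAB]
      · have hi3 : (i:ℕ) = 2*m+1 := by have := i.isLt; omega
        rw [insertEnd_eq_top hi3]
        have hiB : i = BB m := Fin.ext (by simp [hi3])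
        rw [hiB, (lp_swap h).1 hAB]
  · rw [if_neg hAB]
    obtain ⟨hx, hy, hyx⟩ := lp_xy h hAB
    by_cases hiA : i = AA m
    · rw [if_pos hiA, hiA, insertEnd_eq_mid (by simp)]
    rw [if_neg hiA]
    by_cases hiB : i = BB m
    · rw [if_pos hiB, hiB, insertEnd_eq_top (by simp)]
    rw [if_neg hiB]
    have hilt : (i:ℕ) < 2*m := by
      have h1 : (i:ℕ) ≠ 2*m := fun e => hiA (Fin.ext (by simp [e]))
      have h2 : (i:ℕ) ≠ 2*m+1 := fun e => hiB (Fin.ext (by simp [e]))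
      have := i.isLt
      omega
    have hup : up m ⟨(i:ℕ), hilt⟩ = i := Fin.ext rfl
    by_cases hiX : i = μ (AA m)
    · rw [if_pos hiX, insertEnd_of_lt hilt]
      have heA : (μ (up m ⟨(i:ℕ), hilt⟩) : ℕ) = 2*m := by
        rw [hup, hiX, h.1]
        simp
      rw [collapseF_of_eqA heA hy]
      apply Fin.ext
      simp
    rw [if_neg hiX]
    by_cases hiY : i = μ (BB m)
    · rw [if_pos hiY, insertEnd_of_lt hilt]
      have heB : (μ (up m ⟨(i:ℕ), hilt⟩) : ℕ) = 2*m+1 := by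
        rw [hup, hiY, h.1]
        simp
      rw [collapseF_of_eqB heB hx]
      apply Fin.ext
      simp
    rw [if_neg hiY, insertEnd_of_lt hilt]
    have hA' : up m ⟨(i:ℕ), hilt⟩ ≠ μ (AA m) := by
      intro e
      exact hiX (by rw [← hup]; exact e)
    have hB' : up m ⟨(i:ℕ), hilt⟩ ≠ μ (BB m) := by
      intro e
      exact hiY (by rw [← hup]; exact e)
    rw [collapseF_of_lt (partner_lt h _ hA' hB')]
    apply Fin.ext
    simp [hup]

lemma insertEnd_isLP {m : ℕ} {π : Fin (2*m) → Fin (2*m)} (h : IsLinkPattern m π) :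
    IsLinkPattern (m+1) (insertEnd m π) := by
  refine ⟨?_, ?_, ?_⟩
  · intro i
    by_cases hi : (i:ℕ) < 2*m
    · rw [insertEnd_of_lt hi]
      have hlt : ((Fin.castLE (by omega : 2*m ≤ 2*(m+1)) (π ⟨(i:ℕ), hi⟩) : Fin (2*(m+1))) : ℕ) < 2*m := by
        simp
      rw [insertEnd_of_lt hlt]
      apply Fin.ext
      simp [h.1]
    · by_cases hi2 : (i:ℕ) = 2*m
      · rw [insertEnd_eq_mid hi2, insertEnd_eq_top (by simp)]
        exact Fin.ext (by simp [hi2])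
      · have hi3 : (i:ℕ) = 2*m+1 := by have := i.isLt; omega
        rw [insertEnd_eq_top hi3, insertEnd_eq_mid (by simp)]
        exact Fin.ext (by simp [hi3])
  · intro i e
    by_cases hi : (i:ℕ) < 2*m
    · rw [insertEnd_of_lt hi] at e
      have := congrArg Fin.val e
      simp at this
      exact h.2.1 ⟨(i:ℕ), hi⟩ (Fin.ext (by simp [this]))
    · by_cases hi2 : (i:ℕ) = 2*m
      · rw [insertEnd_eq_mid hi2] at e
        have := congrArg Fin.val e
        simp [hi2] at this
      · have hi3 : (i:ℕ) = 2*m+1 := by have := i.isLt; omega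
        rw [insertEnd_eq_top hi3] at e
        have := congrArg Fin.val e
        simp [hi3] at this
  · intro a b c d hab hbc hcd hac hbd
    have hab' : (a:ℕ) < (b:ℕ) := hab
    have hbc' : (b:ℕ) < (c:ℕ) := hbc
    have hcd' : (c:ℕ) < (d:ℕ) := hcd
    by_cases hb : (b:ℕ) < 2*m
    · rw [insertEnd_of_lt hb] at hbd
      have hd : (d:ℕ) < 2*m := by
        have := congrArg Fin.val hbd
        simp at this
        have := (π ⟨(b:ℕ), hb⟩).isLt
        omega
      have ha : (a:ℕ) < 2*m := by omega
      have hc : (c:ℕ) < 2*m := by omega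
      rw [insertEnd_of_lt ha] at hac
      refine h.2.2 ⟨(a:ℕ), ha⟩ ⟨(b:ℕ), hb⟩ ⟨(c:ℕ), hc⟩ ⟨(d:ℕ), hd⟩ hab' hbc' hcd' ?_ ?_
      · apply Fin.ext
        have := congrArg Fin.val hac
        simpa using this
      · apply Fin.ext
        have := congrArg Fin.val hbd
        simpa using this
    · by_cases hb2 : (b:ℕ) = 2*m
      · rw [insertEnd_eq_mid hb2] at hbd
        have := congrArg Fin.val hbd
        simp at this
        have := d.isLt
        omega
      · have hb3 : (b:ℕ) = 2*m+1 := by have := b.isLt; omega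
        rw [insertEnd_eq_top hb3] at hbd
        have := congrArg Fin.val hbd
        simp at this
        have := d.isLt
        omega

def expandF (m : ℕ) (π : Fin (2*m) → Fin (2*m)) (p q : Fin (2*m)) :
    Fin (2*(m+1)) → Fin (2*(m+1)) := fun i =>
  if (i : ℕ) = 2*m then up m q
  else if (i : ℕ) = 2*m+1 then up m p
  else if (i : ℕ) = (q : ℕ) then AA m
  else if (i : ℕ) = (p : ℕ) then BB m
  else if h : (i : ℕ) < 2*m then up m (π ⟨(i:ℕ), h⟩) else i

section Expand

variable {m : ℕ} {π : Fin (2*m) → Fin (2*m)} {p q : Fin (2*m)}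

lemma expandF_mid (i : Fin (2*(m+1))) (hi : (i:ℕ) = 2*m) : expandF m π p q i = up m q := by
  simp [expandF, hi]

lemma expandF_top (i : Fin (2*(m+1))) (hi : (i:ℕ) = 2*m+1) : expandF m π p q i = up m p := by
  simp only [expandF]
  rw [if_neg (by omega), if_pos hi]

lemma expandF_q (i : Fin (2*(m+1))) (hi : (i:ℕ) = (q:ℕ)) : expandF m π p q i = AA m := by
  have := q.isLt
  simp only [expandF]
  rw [if_neg (by omega), if_neg (by omega), if_pos hi]

lemma expandF_p (i : Fin (2*(m+1))) (hi : (i:ℕ) = (p:ℕ)) (hne : (p:ℕ) ≠ (q:ℕ)) :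
    expandF m π p q i = BB m := by
  have := p.isLt
  simp only [expandF]
  rw [if_neg (by omega), if_neg (by omega), if_neg (by omega), if_pos hi]

lemma expandF_gen (i : Fin (2*(m+1))) (hi : (i:ℕ) < 2*m) (hq : (i:ℕ) ≠ (q:ℕ))
    (hp : (i:ℕ) ≠ (p:ℕ)) : expandF m π p q i = up m (π ⟨(i:ℕ), hi⟩) := by
  simp only [expandF]
  rw [if_neg (by omega), if_neg (by omega), if_neg hq, if_neg hp, dif_pos hi]

lemma eFun_expand (h : IsLinkPattern m π) (hlink : π p = q) (hpq : (p:ℕ) < (q:ℕ)) :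
    eFun (m+1) (expandF m π p q) = insertEnd m π := by
  have hqp : π q = p := by rw [← hlink, h.1]
  have hAq : expandF m π p q (AA m) = up m q := expandF_mid _ (by simp)
  have hBp : expandF m π p q (BB m) = up m p := expandF_top _ (by simp)
  have hqlt := q.isLt
  have hplt := p.isLt
  have hAB : expandF m π p q (AA m) ≠ BB m := by
    rw [hAq]
    intro e
    have := congrArg Fin.val e
    simp at this
    omega
  rw [eFun_eq]
  funext i
  rw [if_neg hAB]
  by_cases hiA : i = AA m
  · rw [if_pos hiA, hiA, insertEnd_eq_mid (by simp)]
  rw [if_neg hiA]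
  by_cases hiB : i = BB m
  · rw [if_pos hiB, hiB, insertEnd_eq_top (by simp)]
  rw [if_neg hiB]
  have hilt : (i:ℕ) < 2*m := by
    have h1 : (i:ℕ) ≠ 2*m := fun e => hiA (Fin.ext (by simp [e]))
    have h2 : (i:ℕ) ≠ 2*m+1 := fun e => hiB (Fin.ext (by simp [e]))
    have := i.isLt
    omega
  by_cases hiq : (i:ℕ) = (q:ℕ)
  · have : i = expandF m π p q (AA m) := by rw [hAq]; exact Fin.ext (by simpa using hiq)
    rw [if_pos this, hBp, insertEnd_of_lt hilt]
    apply Fin.ext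
    simp only [up_val]
    have : π ⟨(i:ℕ), hilt⟩ = p := by
      rw [show (⟨(i:ℕ), hilt⟩ : Fin (2*m)) = q from Fin.ext hiq, hqp]
    rw [this]
    simp
  · have hne1 : i ≠ expandF m π p q (AA m) := by
      rw [hAq]
      intro e
      exact hiq (congrArg Fin.val e)
    rw [if_neg hne1]
    by_cases hip : (i:ℕ) = (p:ℕ)
    · have : i = expandF m π p q (BB m) := by rw [hBp]; exact Fin.ext (by simpa using hip)
      rw [if_pos this, hAq, insertEnd_of_lt hilt]
      apply Fin.ext
      simp only [up_val]
      have : π ⟨(i:ℕ), hilt⟩ = q := by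
        rw [show (⟨(i:ℕ), hilt⟩ : Fin (2*m)) = p from Fin.ext hip, hlink]
      rw [this]
      simp
    · have hne2 : i ≠ expandF m π p q (BB m) := by
        rw [hBp]
        intro e
        exact hip (congrArg Fin.val e)
      rw [if_neg hne2, expandF_gen i hilt hiq hip, insertEnd_of_lt hilt]
      apply Fin.ext
      simp

lemma expand_isLP (h : IsLinkPattern m π) (hlink : π p = q) (hpq : (p:ℕ) < (q:ℕ))
    (houter : ∀ c d : Fin (2*m), c < p → q < d → π c ≠ d) :
    IsLinkPattern (m+1) (expandF m π p q) := by
  have hqp : π q = p := by rw [← hlink, h.1]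
  have hqlt := q.isLt
  have hplt := p.isLt
  have hcase : ∀ i : Fin (2*(m+1)), (i:ℕ) = 2*m ∨ (i:ℕ) = 2*m+1 ∨ (i:ℕ) = (q:ℕ) ∨
      (i:ℕ) = (p:ℕ) ∨ ((i:ℕ) < 2*m ∧ (i:ℕ) ≠ (q:ℕ) ∧ (i:ℕ) ≠ (p:ℕ)) := by
    intro i
    have := i.isLt
    omega
  have hπpq : ∀ j : Fin (2*m), (j:ℕ) ≠ (p:ℕ) → (j:ℕ) ≠ (q:ℕ) →
      (π j : ℕ) ≠ (p:ℕ) ∧ (π j : ℕ) ≠ (q:ℕ) := by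
    intro j hjp hjq
    constructor
    · intro e
      have : π j = p := Fin.ext e
      rw [lp_swap h] at this
      rw [hlink] at this
      exact hjq (congrArg Fin.val this).symm
    · intro e
      have : π j = q := Fin.ext e
      rw [lp_swap h] at this
      rw [hqp] at this
      exact hjp (congrArg Fin.val this).symm
  refine ⟨?_, ?_, ?_⟩
  · intro i
    rcases hcase i with hi | hi | hi | hi | ⟨hi, hiq, hip⟩
    · rw [expandF_mid i hi, expandF_q _ (by simp)]
      exact Fin.ext (by simp [hi])
    · rw [expandF_top i hi, expandF_p _ (by simp) (by omega)]
      exact Fin.ext (by simp [hi])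
    · rw [expandF_q i hi, expandF_mid _ (by simp)]
      exact Fin.ext (by simp [hi])
    · rw [expandF_p i hi (by omega), expandF_top _ (by simp)]
      exact Fin.ext (by simp [hi])
    · rw [expandF_gen i hi hiq hip]
      obtain ⟨hp', hq'⟩ := hπpq ⟨(i:ℕ), hi⟩ hip hiq
      rw [expandF_gen _ (by simpa using (π ⟨(i:ℕ), hi⟩).isLt) (by simpa using hq')
        (by simpa using hp')]
      apply Fin.ext
      simp only [up_val, Fin.eta]
      rw [h.1]
  · intro i e
    rcases hcase i with hi | hi | hi | hi | ⟨hi, hiq, hip⟩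
    · rw [expandF_mid i hi] at e
      have := congrArg Fin.val e
      simp [hi] at this
      omega
    · rw [expandF_top i hi] at e
      have := congrArg Fin.val e
      simp [hi] at this
      omega
    · rw [expandF_q i hi] at e
      have := congrArg Fin.val e
      simp [hi] at this
      omega
    · rw [expandF_p i hi (by omega)] at e
      have := congrArg Fin.val e
      simp [hi] at this
      omega
    · rw [expandF_gen i hi hiq hip] at e
      have := congrArg Fin.val e
      simp at this
      exact h.2.1 ⟨(i:ℕ), hi⟩ (Fin.ext (by simpa using this))
  · intro a b c d hab hbc hcd hac hbd
    have hab' : (a:ℕ) < (b:ℕ) := hab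
    have hbc' : (b:ℕ) < (c:ℕ) := hbc
    have hcd' : (c:ℕ) < (d:ℕ) := hcd
    have hd := d.isLt
    -- analyze the link (b, d)
    rcases hcase b with hb | hb | hb | hb | ⟨hb, hbq, hbp⟩
    · -- b = 2m: partner is q < 2m ≤ b < d : contradiction
      rw [expandF_mid b hb] at hbd
      have := congrArg Fin.val hbd
      simp at this
      omega
    · rw [expandF_top b hb] at hbd
      have := congrArg Fin.val hbd
      simp at this
      omega
    · -- b = q, d = AA
      rw [expandF_q b hb] at hbd
      have hdval : (d:ℕ) = 2*m := by
        have := congrArg Fin.val hbd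
        simpa using this.symm
      -- the link (a, c) : a < q < c < 2m
      have ha : (a:ℕ) < 2*m := by omega
      have hc : (c:ℕ) < 2*m := by omega
      have haq : (a:ℕ) ≠ (q:ℕ) := by omega
      have hap : (a:ℕ) ≠ (p:ℕ) := by
        intro e
        rw [expandF_p a e (by omega)] at hac
        have := congrArg Fin.val hac
        simp at this
        omega
      rw [expandF_gen a ha haq hap] at hac
      have hπac : π ⟨(a:ℕ), ha⟩ = ⟨(c:ℕ), hc⟩ := by
        apply Fin.ext
        have := congrArg Fin.val hac
        simpa using this
      rcases Nat.lt_or_ge (a:ℕ) (p:ℕ) with hcmp | hcmp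
      · exact houter ⟨(a:ℕ), ha⟩ ⟨(c:ℕ), hc⟩ hcmp (by show (q:ℕ) < (c:ℕ); omega) hπac
      · have hap' : (p:ℕ) < (a:ℕ) := by omega
        exact h.2.2 p ⟨(a:ℕ), ha⟩ q ⟨(c:ℕ), hc⟩ hap' (by show (a:ℕ) < (q:ℕ); omega)
          (by show (q:ℕ) < (c:ℕ); omega) hlink hπac
    · -- b = p, d = BB
      rw [expandF_p b hb (by omega)] at hbd
      have hdval : (d:ℕ) = 2*m+1 := by
        have := congrArg Fin.val hbd
        simpa using this.symm
      have ha : (a:ℕ) < 2*m := by omega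
      have haq : (a:ℕ) ≠ (q:ℕ) := by omega
      have hap : (a:ℕ) ≠ (p:ℕ) := by omega
      rw [expandF_gen a ha haq hap] at hac
      have hc : (c:ℕ) < 2*m := by
        have := congrArg Fin.val hac
        simp at this
        have := (π ⟨(a:ℕ), ha⟩).isLt
        omega
      have hπac : π ⟨(a:ℕ), ha⟩ = ⟨(c:ℕ), hc⟩ := by
        apply Fin.ext
        have := congrArg Fin.val hac
        simpa using this
      rcases Nat.lt_or_ge (c:ℕ) (q:ℕ) with hcmp | hcmp
      · exact h.2.2 ⟨(a:ℕ), ha⟩ p ⟨(c:ℕ), hc⟩ q (by show (a:ℕ) < (p:ℕ); omega)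
          (by show (p:ℕ) < (c:ℕ); omega) hcmp hπac hlink
      · have hcq : (c:ℕ) ≠ (q:ℕ) := by
          intro e
          have h1 : π ⟨(a:ℕ), ha⟩ = q := by rw [hπac]; exact Fin.ext e
          have h2 : (⟨(a:ℕ), ha⟩ : Fin (2*m)) = p := by rw [← hqp, ← h1, h.1]
          have h3 := congrArg Fin.val h2
          simp at h3
          omega
        exact houter ⟨(a:ℕ), ha⟩ ⟨(c:ℕ), hc⟩ (by show (a:ℕ) < (p:ℕ); omega) (by show (q:ℕ) < (c:ℕ); omega) hπac
    · -- b generic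
      rw [expandF_gen b hb hbq hbp] at hbd
      have hdlt : (d:ℕ) < 2*m := by
        have := congrArg Fin.val hbd
        simp at this
        have := (π ⟨(b:ℕ), hb⟩).isLt
        omega
      have ha : (a:ℕ) < 2*m := by omega
      have hc : (c:ℕ) < 2*m := by omega
      have haq : (a:ℕ) ≠ (q:ℕ) := by
        intro e
        rw [expandF_q a e] at hac
        have := congrArg Fin.val hac
        simp at this
        omega
      have hap : (a:ℕ) ≠ (p:ℕ) := by
        intro e
        rw [expandF_p a e (by omega)] at hac
        have := congrArg Fin.val hac
        simp at this
        omega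
      rw [expandF_gen a ha haq hap] at hac
      refine h.2.2 ⟨(a:ℕ), ha⟩ ⟨(b:ℕ), hb⟩ ⟨(c:ℕ), hc⟩ ⟨(d:ℕ), hdlt⟩ hab' hbc' hcd' ?_ ?_
      · apply Fin.ext
        have := congrArg Fin.val hac
        simpa using this
      · apply Fin.ext
        have := congrArg Fin.val hbd
        simpa using this

end Expand

lemma eFun_fixed {m : ℕ} {μ : Fin (2*(m+1)) → Fin (2*(m+1))} (hAB : μ (AA m) = BB m) :
    eFun (m+1) μ = μ := by
  rw [eFun_eq]
  funext i
  rw [if_pos hAB]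

lemma fiber_iff {m : ℕ} {μ : Fin (2*(m+1)) → Fin (2*(m+1))} {π : Fin (2*m) → Fin (2*m)}
    (h : IsLinkPattern (m+1) μ) :
    eFun (m+1) μ = insertEnd m π ↔ collapseF m μ = π := by
  constructor
  · intro e
    rw [eFun_collapse h] at e
    exact insertEnd_inj e
  · intro e
    rw [eFun_collapse h, e]

lemma fiber_classify {m : ℕ} {μ : Fin (2*(m+1)) → Fin (2*(m+1))} {π : Fin (2*m) → Fin (2*m)}
    (h : IsLinkPattern (m+1) μ) (heq : eFun (m+1) μ = insertEnd m π)
    (hne : μ (AA m) ≠ BB m) :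
    ∃ p q : Fin (2*m), ((p:ℕ) < (q:ℕ) ∧ π p = q ∧
      (∀ c d : Fin (2*m), c < p → q < d → π c ≠ d)) ∧ μ = expandF m π p q := by
  obtain ⟨hx, hy, hyx⟩ := lp_xy h hne
  have hcol : collapseF m μ = π := (fiber_iff h).1 heq
  refine ⟨⟨_, hy⟩, ⟨_, hx⟩, ⟨hyx, ?_, ?_⟩, ?_⟩
  · rw [← hcol]
    apply collapseF_of_eqB _ hx
    have hupy : up m (⟨_, hy⟩ : Fin (2*m)) = μ (BB m) := Fin.ext rfl
    rw [hupy, h.1]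
    simp
  · intro c d hc hd hπcd
    have hcv : (c:ℕ) < (μ (BB m):ℕ) := hc
    have hdv : (μ (AA m):ℕ) < (d:ℕ) := hd
    have hgc : collapseF m μ c = d := by rw [hcol]; exact hπcd
    have hA' : up m c ≠ μ (AA m) := by
      intro e
      have := congrArg Fin.val e
      simp at this
      omega
    have hB' : up m c ≠ μ (BB m) := by
      intro e
      have := congrArg Fin.val e
      simp at this
      omega
    have hlt := partner_lt h c hA' hB'
    rw [collapseF_of_lt hlt] at hgc
    have hμc : μ (up m c) = up m d := Fin.ext (by simpa using congrArg Fin.val hgc)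
    refine lp_nc' h (up m c) (μ (BB m)) (up m d) (BB m) (by simpa using hcv) ?_ ?_ hμc (h.1 _)
    · simp only [up_val]
      omega
    · simp only [up_val, BB_val]
      have := d.isLt
      omega
  · funext i
    by_cases hi2m : (i:ℕ) = 2*m
    · rw [expandF_mid i hi2m]
      have hiA : i = AA m := Fin.ext (by simp [hi2m])
      rw [hiA]
      exact Fin.ext rfl
    by_cases hi2m1 : (i:ℕ) = 2*m+1
    · rw [expandF_top i hi2m1]
      have hiB : i = BB m := Fin.ext (by simp [hi2m1])
      rw [hiB]
      exact Fin.ext rfl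
    have hilt : (i:ℕ) < 2*m := by have := i.isLt; omega
    by_cases hix : (i:ℕ) = (μ (AA m) : ℕ)
    · rw [expandF_q i hix, show i = μ (AA m) from Fin.ext hix, h.1]
    by_cases hiy : (i:ℕ) = (μ (BB m) : ℕ)
    · rw [expandF_p i hiy (by simp; omega), show i = μ (BB m) from Fin.ext hiy, h.1]
    · rw [expandF_gen i hilt hix hiy]
      have hup : up m ⟨(i:ℕ), hilt⟩ = i := Fin.ext rfl
      have hA' : up m ⟨(i:ℕ), hilt⟩ ≠ μ (AA m) := by
        intro e
        exact hix (congrArg Fin.val e)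
      have hB' : up m ⟨(i:ℕ), hilt⟩ ≠ μ (BB m) := by
        intro e
        exact hiy (congrArg Fin.val e)
      have hlt := partner_lt h _ hA' hB'
      rw [← hcol, collapseF_of_lt hlt]
      apply Fin.ext
      simp [hup]

def fibMap (m : ℕ) (π : {p : Fin (2*m) → Fin (2*m) // IsLinkPattern m p}) :
    Option {pr : Fin (2*m) × Fin (2*m) // pr.1 < pr.2 ∧ π.1 pr.1 = pr.2 ∧
      ∀ c d : Fin (2*m), c < pr.1 → pr.2 < d → π.1 c ≠ d} →
    {μ : {ν : Fin (2*(m+1)) → Fin (2*(m+1)) // IsLinkPattern (m+1) ν} //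
      eFun (m+1) μ.1 = insertEnd m π.1}
  | none => ⟨⟨insertEnd m π.1, insertEnd_isLP π.2⟩,
      eFun_fixed (insertEnd_eq_mid (by simp))⟩
  | some l => ⟨⟨expandF m π.1 l.1.1 l.1.2, expand_isLP π.2 l.2.2.1 l.2.1 l.2.2.2⟩,
      eFun_expand π.2 l.2.2.1 l.2.1⟩

lemma fiber_card (m : ℕ) (π : {p : Fin (2*m) → Fin (2*m) // IsLinkPattern m p}) :
    exposure m π.1 + 1 = Nat.card {μ : {ν : Fin (2*(m+1)) → Fin (2*(m+1)) //
      IsLinkPattern (m+1) ν} // eFun (m+1) μ.1 = insertEnd m π.1} := by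
  classical
  have hbij : Function.Bijective (fibMap m π) := by
    constructor
    · intro o1 o2 e
      match o1, o2 with
      | none, none => rfl
      | none, some l =>
        exfalso
        have e1 : insertEnd m π.1 = expandF m π.1 l.1.1 l.1.2 :=
          congrArg (fun z => z.1.1) e
        have e2 := congrFun e1 (AA m)
        rw [insertEnd_eq_mid (by simp), expandF_mid _ (by simp)] at e2
        have := congrArg Fin.val e2
        simp at this
        have := l.1.2.isLt
        omega
      | some l, none =>
        exfalso
        have e1 : insertEnd m π.1 = expandF m π.1 l.1.1 l.1.2 :=
          (congrArg (fun z => z.1.1) e).symm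
        have e2 := congrFun e1 (AA m)
        rw [insertEnd_eq_mid (by simp), expandF_mid _ (by simp)] at e2
        have := congrArg Fin.val e2
        simp at this
        have := l.1.2.isLt
        omega
      | some l1, some l2 =>
        have e1 : expandF m π.1 l1.1.1 l1.1.2 = expandF m π.1 l2.1.1 l2.1.2 :=
          congrArg (fun z => z.1.1) e
        have e2 := congrFun e1 (AA m)
        rw [expandF_mid _ (by simp), expandF_mid _ (by simp)] at e2
        have hq : l1.1.2 = l2.1.2 := Fin.ext (by simpa using congrArg Fin.val e2)
        have hp : l1.1.1 = l2.1.1 := by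
          have k1 : π.1 l1.1.2 = l1.1.1 := (lp_swap π.2).1 l1.2.2.1
          have k2 : π.1 l2.1.2 = l2.1.1 := (lp_swap π.2).1 l2.2.2.1
          rw [← k1, ← k2, hq]
        congr 1
        exact Subtype.ext (Prod.ext hp hq)
    · intro μf
      obtain ⟨⟨μ, hμ⟩, heq⟩ := μf
      by_cases hAB : μ (AA m) = BB m
      · refine ⟨none, ?_⟩
        apply Subtype.ext
        apply Subtype.ext
        show insertEnd m π.1 = μ
        rw [← heq, eFun_fixed hAB]
      · obtain ⟨p, q, hprops, hμeq⟩ := fiber_classify hμ heq hAB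
        refine ⟨some ⟨(p, q), hprops.1, hprops.2.1, hprops.2.2⟩, ?_⟩
        apply Subtype.ext
        apply Subtype.ext
        show expandF m π.1 p q = μ
        exact hμeq.symm
  rw [show exposure m π.1 = Nat.card {pr : Fin (2*m) × Fin (2*m) // pr.1 < pr.2 ∧
      π.1 pr.1 = pr.2 ∧ ∀ c d : Fin (2*m), c < pr.1 → pr.2 < d → π.1 c ≠ d} from rfl,
    ← Finite.card_option, Nat.card_eq_of_bijective _ hbij]

lemma lp_card (n : ℕ) :
    Nat.card {μ : Fin (2*n) → Fin (2*n) // IsLinkPattern n μ} = catalan n :=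
  (Nat.card_congr (lpEquiv n)).trans (natLP_card n)


/-- For `n = m + 1 ≥ 2`: the sum over all link patterns `π` of `n - 1` strands of
`(exposure number of π) + 1` equals the Catalan number `C_n`; equivalently, the set
of link patterns of `n` strands is partitioned by the fibers `e⁻¹(π')`, where `π'`
ranges over the insertions of a strand at the end of link patterns of `n - 1`
strands. -/
theorem sum_exposure_succ_eq_catalan (m : ℕ) (hm : 1 ≤ m) :
    (∑ π : {μ : Fin (2*m) → Fin (2*m) // IsLinkPattern m μ}, (exposure m π.1 + 1))
        = catalan (m + 1) ∧
    (∀ μ : Fin (2*(m+1)) → Fin (2*(m+1)), IsLinkPattern (m+1) μ →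
        ∃! π : {p : Fin (2*m) → Fin (2*m) // IsLinkPattern m p},
          eFun (m+1) μ = insertEnd m π.1) := by
  constructor
  · classical
    have hstep : ∀ π : {μ : Fin (2*m) → Fin (2*m) // IsLinkPattern m μ},
        exposure m π.1 + 1 = (Finset.univ.filter
          (fun ν : {ν : Fin (2*(m+1)) → Fin (2*(m+1)) // IsLinkPattern (m+1) ν} =>
            (⟨collapseF m ν.1, collapse_isLP ν.2⟩ :
              {μ : Fin (2*m) → Fin (2*m) // IsLinkPattern m μ}) = π)).card := by
      intro π
      rw [fiber_card m π]
      have hpred : ∀ ν : {ν : Fin (2*(m+1)) → Fin (2*(m+1)) // IsLinkPattern (m+1) ν},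
          ((⟨collapseF m ν.1, collapse_isLP ν.2⟩ :
              {μ : Fin (2*m) → Fin (2*m) // IsLinkPattern m μ}) = π) ↔
            eFun (m+1) ν.1 = insertEnd m π.1 := by
        intro ν
        rw [fiber_iff ν.2]
        constructor
        · intro e
          rw [← e]
        · intro e
          exact Subtype.ext e
      rw [Nat.card_eq_fintype_card, Fintype.card_subtype]
      congr 1
      apply Finset.filter_congr
      intro ν _
      exact (hpred ν).symm
    rw [Finset.sum_congr rfl (fun π _ => hstep π)]
    rw [← Finset.card_eq_sum_card_fiberwise (fun ν _ => Finset.mem_univ _),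
      Finset.card_univ, ← Nat.card_eq_fintype_card, lp_card (m+1)]
  · intro μ h
    refine ⟨⟨collapseF m μ, collapse_isLP h⟩, eFun_collapse h, ?_⟩
    intro π hπ
    exact Subtype.ext ((fiber_iff h).1 hπ).symm
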